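/- Let N = (P, T, F) be a nonredundant workflow net and p ∈ P. There exists k < (‖T‖ + 2)^{|T|} such that some marking m reachable from {i:k} satisfies m[p] > 0, where ‖T‖ denotes the maximum arc weight of N. -/

import Mathlib

/-- A Petri net over places `P` and transitions `T`, given by pre/post arc weights. -/
structure PetriNet (P T : Type) where
  pre : T → P → ℕ
  post : T → P → ℕ

namespace PetriNet

variable {P T : Type}

/-- Transition `t` is enabled in marking `m`. -/
def Enabled (N : PetriNet P T) (m : P → ℕ) (t : T) : Prop := ∀ p, N.pre t p ≤ m p

/-- Firing transition `t` in `m` yields `m'`. -/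
def Fire (N : PetriNet P T) (m : P → ℕ) (t : T) (m' : P → ℕ) : Prop :=
  N.Enabled m t ∧ ∀ p, m' p = m p - N.pre t p + N.post t p

def Step (N : PetriNet P T) (m m' : P → ℕ) : Prop := ∃ t, N.Fire m t m'

/-- Reachability `m →* m'`. -/
def Reach (N : PetriNet P T) : (P → ℕ) → (P → ℕ) → Prop := Relation.ReflTransGen N.Step

/-- Effect of a transition, as an integer vector. -/
def eff (N : PetriNet P T) (t : T) (p : P) : ℤ := (N.post t p : ℤ) - (N.pre t p : ℤ)

def ZStep (N : PetriNet P T) (m m' : P → ℤ) : Prop := ∃ t, ∀ p, m' p = m p + N.eff t p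

/-- Z-reachability: no enabledness constraint, markings range over ℤ. -/
def ZReach (N : PetriNet P T) : (P → ℤ) → (P → ℤ) → Prop := Relation.ReflTransGen N.ZStep

/-- Maximal arc weight `‖T‖`. -/
def maxW (N : PetriNet P T) [Fintype P] [Fintype T] : ℕ :=
  Finset.univ.sup fun t => Finset.univ.sup fun p => max (N.pre t p) (N.post t p)

/-- Edge relation of the underlying graph, on `P ⊕ T`. -/
def Edge (N : PetriNet P T) : (P ⊕ T) → (P ⊕ T) → Prop
  | Sum.inl p, Sum.inr t => 0 < N.pre t p
  | Sum.inr t, Sum.inl p => 0 < N.post t p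
  | _, _ => False

/-- `N` is bounded from marking `m`. -/
def BoundedFrom (N : PetriNet P T) (m : P → ℕ) : Prop :=
  ∃ b : ℕ, ∀ m', N.Reach m m' → ∀ p, m' p ≤ b

/-- `N` is cyclic from marking `m`. -/
def CyclicFrom (N : PetriNet P T) (m : P → ℕ) : Prop :=
  ∀ m', N.Reach m m' → N.Reach m' m

/-- Transition `t` is quasi-live from `m`. -/
def QuasiLiveT (N : PetriNet P T) (m : P → ℕ) (t : T) : Prop :=
  ∃ m', N.Reach m m' ∧ N.Enabled m' t

/-- `N` is quasi-live from `m`. -/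
def QuasiLiveFrom (N : PetriNet P T) (m : P → ℕ) : Prop :=
  ∀ t, N.QuasiLiveT m t

/-- Transition `t` is live from `m`. -/
def LiveT (N : PetriNet P T) (m : P → ℕ) (t : T) : Prop :=
  ∀ m', N.Reach m m' → N.QuasiLiveT m' t

end PetriNet

/-- A workflow net: a Petri net with initial place `ini`, final place `fin`,
no production into `ini`, no consumption from `fin`, and every node on a path
from `ini` to `fin` in the underlying graph. -/
structure WorkflowNet (P T : Type) extends PetriNet P T where
  ini : P
  fin : P
  ini_ne_fin : ini ≠ fin
  no_prod_ini : ∀ t, post t ini = 0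
  no_cons_fin : ∀ t, pre t fin = 0
  on_path : ∀ v : P ⊕ T,
    Relation.ReflTransGen toPetriNet.Edge (Sum.inl ini) v ∧
    Relation.ReflTransGen toPetriNet.Edge v (Sum.inl fin)

namespace WorkflowNet

variable {P T : Type}

/-- The marking `{i : k}`. -/
def iniM [DecidableEq P] (N : WorkflowNet P T) (k : ℕ) : P → ℕ :=
  fun p => if p = N.ini then k else 0

/-- The marking `{f : k}`. -/
def finM [DecidableEq P] (N : WorkflowNet P T) (k : ℕ) : P → ℕ :=
  fun p => if p = N.fin then k else 0

/-- `N` is `k`-sound. -/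
def KSound [DecidableEq P] (N : WorkflowNet P T) (k : ℕ) : Prop :=
  ∀ m, N.toPetriNet.Reach (N.iniM k) m → N.toPetriNet.Reach m (N.finM k)

/-- `N` is generalised sound. -/
def GeneralisedSound [DecidableEq P] (N : WorkflowNet P T) : Prop :=
  ∀ k : ℕ, 1 ≤ k → N.KSound k

/-- `N` is structurally sound. -/
def StructurallySound [DecidableEq P] (N : WorkflowNet P T) : Prop :=
  ∃ k : ℕ, 1 ≤ k ∧ N.KSound k

/-- All places of `N` are nonredundant. -/
def Nonredundant [DecidableEq P] (N : WorkflowNet P T) : Prop :=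
  ∀ p : P, ∃ (k : ℕ) (m : P → ℕ), N.toPetriNet.Reach (N.iniM k) m ∧ 0 < m p

/-- `N` is strongly `k`-sound. -/
def StronglyKSound [DecidableEq P] (N : WorkflowNet P T) (k : ℕ) : Prop :=
  ∀ m : P → ℕ,
    N.toPetriNet.ZReach (fun p => ((N.iniM k) p : ℤ)) (fun p => (m p : ℤ)) →
    N.toPetriNet.Reach m (N.finM k)

end WorkflowNet

section Helpers

variable {P T : Type}

lemma PetriNet.pre_le_maxW (N : PetriNet P T) [Fintype P] [Fintype T] (t : T) (p : P) :
    N.pre t p ≤ N.maxW :=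
  le_trans (le_trans (le_max_left _ _)
      (Finset.le_sup (f := fun p => max (N.pre t p) (N.post t p)) (Finset.mem_univ p)))
    (Finset.le_sup (f := fun t => Finset.univ.sup fun p => max (N.pre t p) (N.post t p))
      (Finset.mem_univ t))

lemma PetriNet.post_le_maxW (N : PetriNet P T) [Fintype P] [Fintype T] (t : T) (p : P) :
    N.post t p ≤ N.maxW :=
  le_trans (le_trans (le_max_right _ _)
      (Finset.le_sup (f := fun p => max (N.pre t p) (N.post t p)) (Finset.mem_univ p)))
    (Finset.le_sup (f := fun t => Finset.univ.sup fun p => max (N.pre t p) (N.post t p))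
      (Finset.mem_univ t))

lemma PetriNet.reach_add (N : PetriNet P T) {m m' : P → ℕ} (a : P → ℕ)
    (h : N.Reach m m') : N.Reach (fun p => m p + a p) (fun p => m' p + a p) := by
  induction h with
  | refl => exact Relation.ReflTransGen.refl
  | tail _ hbc ih =>
    refine ih.tail ?_
    obtain ⟨t, hen, heq⟩ := hbc
    refine ⟨t, fun p => le_trans (hen p) (Nat.le_add_right _ _), fun p => ?_⟩
    have h1 := hen p; have h2 := heq p
    dsimp only
    omega

lemma PetriNet.fire_many (N : PetriNet P T) (t : T) (c : ℕ) (m : P → ℕ)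
    (h : ∀ p, c * N.pre t p ≤ m p) :
    N.Reach m (fun p => m p - c * N.pre t p + c * N.post t p) := by
  induction c generalizing m with
  | zero =>
    have : (fun p => m p - 0 * N.pre t p + 0 * N.post t p) = m := by
      funext p; simp
    rw [this]
    exact Relation.ReflTransGen.refl
  | succ c ih =>
    have hen : N.Enabled m t := by
      intro p
      refine le_trans ?_ (h p)
      calc N.pre t p = 1 * N.pre t p := (one_mul _).symm
        _ ≤ (c+1) * N.pre t p := Nat.mul_le_mul_right _ (by omega)
    set m₁ : P → ℕ := fun p => m p - N.pre t p + N.post t p with hm₁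
    have hstep : N.Step m m₁ := ⟨t, hen, fun p => rfl⟩
    have hc : ∀ p, c * N.pre t p ≤ m₁ p := by
      intro p
      have h1 := h p
      have e1 : (c+1) * N.pre t p = c * N.pre t p + N.pre t p := by ring
      rw [e1] at h1
      simp only [hm₁]
      omega
    have := ih m₁ hc
    have heq : (fun p => m₁ p - c * N.pre t p + c * N.post t p)
        = (fun p => m p - (c+1) * N.pre t p + (c+1) * N.post t p) := by
      funext p
      have h1 := h p
      have e1 : (c+1) * N.pre t p = c * N.pre t p + N.pre t p := by ring
      have e2 : (c+1) * N.post t p = c * N.post t p + N.post t p := by ring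
      rw [e1] at h1 ⊢
      rw [e2]
      simp only [hm₁]
      have h3 := hen p
      generalize c * N.pre t p = A at *
      generalize c * N.post t p = B at *
      omega
    rw [heq] at this
    exact (Relation.ReflTransGen.refl.tail hstep).trans this

lemma WorkflowNet.reach_scale [DecidableEq P] (N : WorkflowNet P T) {k : ℕ} {m : P → ℕ}
    (h : N.toPetriNet.Reach (N.iniM k) m) (c : ℕ) :
    N.toPetriNet.Reach (N.iniM (c * k)) (fun p => c * m p) := by
  induction c with
  | zero =>
    have : N.iniM (0 * k) = (fun p => 0 * m p) := by
      funext p; simp [WorkflowNet.iniM]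
    rw [this]
    exact Relation.ReflTransGen.refl
  | succ c ih =>
    have h1 : N.iniM ((c+1) * k) = fun p => N.iniM (c*k) p + N.iniM k p := by
      funext p; simp only [WorkflowNet.iniM]; split <;> ring
    have r1 : N.toPetriNet.Reach (fun p => N.iniM (c*k) p + N.iniM k p)
        (fun p => c * m p + N.iniM k p) := N.toPetriNet.reach_add _ ih
    have r2 : N.toPetriNet.Reach (fun p => N.iniM k p + c * m p)
        (fun p => m p + c * m p) := N.toPetriNet.reach_add _ h
    have e2 : (fun p => c * m p + N.iniM k p) = (fun p => N.iniM k p + c * m p) := by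
      funext p; ring
    have e3 : (fun p => m p + c * m p) = (fun p => (c+1) * m p) := by
      funext p; ring
    have r2' := r2
    rw [← e2] at r2'
    rw [e3] at r2'
    rw [h1]
    exact r1.trans r2'

end Helpers
/-- The "support" predicate: `q` can hold tokens given transitions in `L` were used. -/
def WorkflowNet.VP (N : WorkflowNet P T) (L : List T) (q : P) : Prop :=
  q = N.ini ∨ ∃ t ∈ L, 0 < N.post t q

lemma WorkflowNet.VP_mono {N : WorkflowNet P T} {L L' : List T} (h : ∀ t ∈ L, t ∈ L') {q : P} :
    N.VP L q → N.VP L' q := by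
  rintro (rfl | ⟨t, ht, hp⟩)
  · exact Or.inl rfl
  · exact Or.inr ⟨t, h t ht, hp⟩

lemma WorkflowNet.lemA [DecidableEq P] [Fintype P] [Fintype T] (N : WorkflowNet P T)
    {k : ℕ} {m : P → ℕ} (h : N.toPetriNet.Reach (N.iniM k) m) :
    ∃ L : List T, L.Nodup ∧
      (∀ q, 0 < m q → N.VP L q) ∧
      (∀ L₁ t L₂, L = L₁ ++ t :: L₂ → ∀ q, 0 < N.pre t q → N.VP L₁ q) ∧
      (∀ L₁ L₂, L = L₁ ++ L₂ →
        ∃ k', k' ≤ N.toPetriNet.maxW * (N.toPetriNet.maxW + 1) ^ L₁.length ∧ ∃ m',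
          N.toPetriNet.Reach (N.iniM k') m' ∧
          ∀ q, N.VP L₁ q → N.toPetriNet.maxW ≤ m' q) := by
  classical
  set W := N.toPetriNet.maxW with hWdef
  induction h with
  | refl =>
    refine ⟨[], List.nodup_nil, ?_, ?_, ?_⟩
    · intro q hq
      left
      by_contra hne
      simp [WorkflowNet.iniM, hne] at hq
    · intro L₁ t L₂ heq
      simp at heq
    · intro L₁ L₂ heqL
      have h1 : L₁ = [] := by cases L₁ <;> simp_all
      subst h1
      refine ⟨W, by simp, N.iniM W, Relation.ReflTransGen.refl, ?_⟩
      rintro q (rfl | ⟨t, ht, _⟩)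
      · simp [WorkflowNet.iniM]
      · simp at ht
  | @tail mb mc hreach hstep ih =>
    obtain ⟨L, hnd, h1, h2, h3⟩ := ih
    obtain ⟨t, hen, heq⟩ := hstep
    by_cases htL : t ∈ L
    · refine ⟨L, hnd, ?_, h2, h3⟩
      intro q hq
      by_cases hpost : 0 < N.post t q
      · exact Or.inr ⟨t, htL, hpost⟩
      · have hmb : 0 < mb q := by have := heq q; omega
        exact h1 q hmb
    · refine ⟨L ++ [t], ?_, ?_, ?_, ?_⟩
      · simp [List.nodup_append, hnd, htL]
        intro a ha hat
        subst hat
        exact htL ha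
      · intro q hq
        by_cases hpost : 0 < N.post t q
        · exact Or.inr ⟨t, by simp, hpost⟩
        · have hmb : 0 < mb q := by have := heq q; omega
          exact WorkflowNet.VP_mono (fun s hs => by simp [hs]) (h1 q hmb)
      · intro L₁ s L₂ heqL
        rcases List.eq_nil_or_concat L₂ with rfl | ⟨L₂', s', rfl⟩
        · have hlen : L.length = L₁.length := by
            have := congrArg List.length heqL
            simp at this
            omega
          obtain ⟨hL, hts⟩ := List.append_inj heqL hlen
          have hts' : t = s := by simpa using hts
          subst hts'
          intro q hq
          have hmb : 0 < mb q := lt_of_lt_of_le hq (hen q)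
          exact hL ▸ (h1 q hmb)
        · have heqL' : L ++ [t] = (L₁ ++ s :: L₂') ++ [s'] := by
            rw [heqL]; simp
          have hlen : L.length = (L₁ ++ s :: L₂').length := by
            have := congrArg List.length heqL'
            simp at this
            simp
            omega
          obtain ⟨hL, _⟩ := List.append_inj heqL' hlen
          exact h2 L₁ s L₂' hL
      · intro L₁ L₂ heqL
        rcases List.eq_nil_or_concat L₂ with rfl | ⟨L₂', s, rfl⟩
        · -- L₁ is the full new list L ++ [t]
          have hL₁ : L₁ = L ++ [t] := by simpa using heqL.symm
          subst hL₁
          obtain ⟨k₀, hk₀, m₀, hr₀, hcov₀⟩ := h3 L [] (by simp)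
          have hpre : ∀ q, 0 < N.pre t q → N.VP L q := fun q hq =>
            h1 q (lt_of_lt_of_le hq (hen q))
          have hpreW : ∀ q, N.pre t q ≤ W := fun q => N.toPetriNet.pre_le_maxW t q
          have hpostW : ∀ q, N.post t q ≤ W := fun q => N.toPetriNet.post_le_maxW t q
          have hsc := N.reach_scale hr₀ (W + 1)
          have hprem : ∀ q, 0 < N.pre t q → N.pre t q ≤ m₀ q := by
            intro q hq
            exact le_trans (hpreW q) (hcov₀ q (hpre q hq))
          have hcond : ∀ p, W * N.pre t p ≤ (W + 1) * m₀ p := by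
            intro p
            by_cases hp : 0 < N.pre t p
            · calc W * N.pre t p ≤ W * m₀ p := Nat.mul_le_mul_left _ (hprem p hp)
                _ ≤ (W + 1) * m₀ p := Nat.mul_le_mul_right _ (by omega)
            · have : N.pre t p = 0 := by omega
              simp [this]
          have hfire := N.toPetriNet.fire_many t W _ hcond
          refine ⟨(W + 1) * k₀, ?_, _, hsc.trans hfire, ?_⟩
          · calc (W + 1) * k₀ ≤ (W + 1) * (W * (W + 1) ^ L.length) :=
                  Nat.mul_le_mul_left _ hk₀
              _ = W * (W + 1) ^ (L.length + 1) := by ring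
              _ = W * (W + 1) ^ (L ++ [t]).length := by simp
          · intro q hq
            have hkey : ∀ (hm : W ≤ m₀ q), W ≤ (W + 1) * m₀ q - W * N.pre t q + W * N.post t q := by
              intro hm
              have hprele : N.pre t q ≤ m₀ q := by
                by_cases hp : 0 < N.pre t q
                · exact hprem q hp
                · omega
              have h4 : W * N.pre t q ≤ W * m₀ q := Nat.mul_le_mul_left _ hprele
              have e : (W + 1) * m₀ q = W * m₀ q + m₀ q := by ring
              rw [e]
              generalize W * N.pre t q = A at *
              generalize W * N.pre t q = A' at *
              generalize W * m₀ q = B at *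
              omega
            rcases hq with rfl | ⟨s, hs, hpost⟩
            · exact hkey (hcov₀ _ (Or.inl rfl))
            · rcases List.mem_append.mp hs with hsL | hst
              · exact hkey (hcov₀ q (Or.inr ⟨s, hsL, hpost⟩))
              · have hst' : s = t := by simpa using hst
                subst hst'
                have : W ≤ W * N.post s q := by
                  calc W = W * 1 := by ring
                    _ ≤ W * N.post s q := Nat.mul_le_mul_left _ hpost
                omega
        · have heqL' : L ++ [t] = (L₁ ++ L₂') ++ [s] := by rw [heqL]; simp
          have hlen : L.length = (L₁ ++ L₂').length := by
            have := congrArg List.length heqL'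
            simp at this
            simp
            omega
          obtain ⟨hL, _⟩ := List.append_inj heqL' hlen
          exact h3 L₁ L₂' hL
/-- In a nonredundant workflow net, every place can be marked starting from a
small number of initial tokens. -/
theorem place_cover_small {P T : Type} [DecidableEq P] [Fintype P] [Fintype T]
    (N : WorkflowNet P T) (hN : N.Nonredundant) (p : P) :
    ∃ k : ℕ, k < (N.toPetriNet.maxW + 2) ^ (Fintype.card T) ∧
      ∃ m : P → ℕ, N.toPetriNet.Reach (N.iniM k) m ∧ 0 < m p := by
  classical
  set W := N.toPetriNet.maxW with hWdef
  obtain ⟨k₁, m₁, hr₁, hp₁⟩ := hN p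
  obtain ⟨L, hnd, h1, h2, h3⟩ := N.lemA hr₁
  rcases h1 p hp₁ with hpi | ⟨t, htL, hpost⟩
  · -- p = ini : one token suffices; T is nonempty thanks to the final place
    obtain ⟨k₂, m₂, hr₂, hf₂⟩ := hN N.fin
    obtain ⟨L₂, _, g1, _, _⟩ := N.lemA hr₂
    have hTne : Nonempty T := by
      rcases g1 N.fin hf₂ with hfi | ⟨t, _, _⟩
      · exact absurd hfi.symm N.ini_ne_fin
      · exact ⟨t⟩
    have hc : 1 ≤ Fintype.card T := Fintype.card_pos
    refine ⟨1, ?_, N.iniM 1, Relation.ReflTransGen.refl, ?_⟩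
    · exact Nat.one_lt_pow (by omega) (by omega)
    · simp [WorkflowNet.iniM, hpi]
  · obtain ⟨L₁, L₂, rfl⟩ := List.append_of_mem htL
    obtain ⟨k₀, hk₀, m₀, hr₀, hcov₀⟩ := h3 L₁ (t :: L₂) rfl
    have hen : N.toPetriNet.Enabled m₀ t := by
      intro q
      by_cases hq : 0 < N.pre t q
      · exact le_trans (N.toPetriNet.pre_le_maxW t q) (hcov₀ q (h2 L₁ t L₂ rfl q hq))
      · omega
    have hstep : N.toPetriNet.Step m₀ (fun q => m₀ q - N.pre t q + N.post t q) :=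
      ⟨t, hen, fun q => rfl⟩
    refine ⟨k₀, ?_, _, hr₀.tail hstep, ?_⟩
    · have hlenL : (L₁ ++ t :: L₂).length ≤ Fintype.card T := hnd.length_le_card
      have hlen : L₁.length + 1 ≤ Fintype.card T := by
        simp [List.length_append] at hlenL
        omega
      have hc : Fintype.card T ≠ 0 := by omega
      calc k₀ ≤ W * (W + 1) ^ L₁.length := hk₀
        _ ≤ (W + 1) * (W + 1) ^ L₁.length := Nat.mul_le_mul_right _ (by omega)
        _ = (W + 1) ^ (L₁.length + 1) := by ring
        _ ≤ (W + 1) ^ (Fintype.card T) := Nat.pow_le_pow_right (by omega) hlen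
        _ < (W + 2) ^ (Fintype.card T) := Nat.pow_lt_pow_left (by omega) hc
    · show 0 < m₀ p - N.pre t p + N.post t p
      omega
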